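/- Every castle has an even number of reflex edges. -/

import Mathlib

/-!
Common definitions: orthogonal polyhedra in `ℝ³`, edges, reflex edges,
edge guards (closed and open), 2-reflex orthogonal polyhedra with their
canonical partition into bricks, contact rectangles, collars, primitive
contact rectangles, stacks, castles and double castles, prisms and
monotone orthogonal polyhedra.
-/

noncomputable section

/-- A point of `ℝ³`. -/
abbrev Pt : Type := Fin 3 → ℝ

/-- The closed axis-parallel box with opposite corners `lo` and `hi`. -/
def box (lo hi : Pt) : Set Pt := {x | ∀ i, lo i ≤ x i ∧ x i ≤ hi i}

/-- The closed segment determined by an (ordered) pair of points. -/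
def seg (e : Pt × Pt) : Set Pt := segment ℝ e.1 e.2

/-- A pair of points is horizontal if both have the same `z`-coordinate. -/
def Horizontal (e : Pt × Pt) : Prop := e.1 2 = e.2 2

/-- A point `p` of the region `S` near which `S` looks like a convex
(dihedral angle `π/2`) edge in direction `i`: in the two coordinate
directions orthogonal to `i`, the region is locally a quadrant. -/
def ConvexEdgePoint (S : Set Pt) (p : Pt) (i : Fin 3) : Prop :=
  ∃ ε > (0 : ℝ), ∃ j k : Fin 3, j ≠ i ∧ k ≠ i ∧ j ≠ k ∧ ∃ s t : ℝ,
    (s = 1 ∨ s = -1) ∧ (t = 1 ∨ t = -1) ∧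
    S ∩ Metric.ball p ε =
      {x ∈ Metric.ball p ε | 0 ≤ s * (x j - p j) ∧ 0 ≤ t * (x k - p k)}

/-- A point `p` of the region `S` near which `S` looks like a reflex
(dihedral angle `3π/2`) edge in direction `i`: in the two coordinate
directions orthogonal to `i`, the region is locally the complement of a
quadrant. -/
def ReflexEdgePoint (S : Set Pt) (p : Pt) (i : Fin 3) : Prop :=
  ∃ ε > (0 : ℝ), ∃ j k : Fin 3, j ≠ i ∧ k ≠ i ∧ j ≠ k ∧ ∃ s t : ℝ,
    (s = 1 ∨ s = -1) ∧ (t = 1 ∨ t = -1) ∧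
    S ∩ Metric.ball p ε =
      {x ∈ Metric.ball p ε | 0 ≤ s * (x j - p j) ∨ 0 ≤ t * (x k - p k)}

/-- A finite set `G` of *closed edge guards* guards the region `S`:
every point of `S` is seen by some point of some guard, where a point
`p` sees `q` if the closed segment from `p` to `q` lies in `S`. -/
def GuardsClosed (S : Set Pt) (G : Finset (Pt × Pt)) : Prop :=
  ∀ q ∈ S, ∃ e ∈ G, ∃ p ∈ segment ℝ e.1 e.2, segment ℝ p q ⊆ S

/-- A finite set `G` of *open edge guards* guards the region `S`:
every point of `S` is seen by some point of some guard, where guard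
points range over the open segment (the edge minus its endpoints). -/
def GuardsOpen (S : Set Pt) (G : Finset (Pt × Pt)) : Prop :=
  ∀ q ∈ S, ∃ e ∈ G, ∃ p ∈ openSegment ℝ e.1 e.2, segment ℝ p q ⊆ S

/-- An **orthogonal polyhedron**: a connected finite union of
nondegenerate axis-parallel boxes in `ℝ³`, which is regular closed,
together with its edges (maximal axis-parallel segments of the boundary
where two non-coplanar faces meet), the subset of reflex edges (those
with interior dihedral angle `3π/2`, as opposed to convex edges with
angle `π/2`), and the genus of its boundary surface. -/
structure OrthoPolyhedron where
  /-- The solid region occupied by the polyhedron. -/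
  carrier : Set Pt
  /-- A finite family of boxes (given by pairs of opposite corners) whose union is the polyhedron. -/
  boxes : Finset (Pt × Pt)
  boxes_nonempty : boxes.Nonempty
  boxes_proper : ∀ B ∈ boxes, ∀ i, B.1 i < B.2 i
  carrier_eq : carrier = ⋃ B ∈ boxes, box B.1 B.2
  carrier_connected : IsConnected carrier
  carrier_regular : carrier = closure (interior carrier)
  /-- The edges of the polyhedron, each given by its pair of endpoints. -/
  edges : Finset (Pt × Pt)
  /-- The reflex edges of the polyhedron. -/
  reflexEdges : Finset (Pt × Pt)
  reflex_subset : reflexEdges ⊆ edges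
  edges_nondegenerate : ∀ e ∈ edges, e.1 ≠ e.2
  edges_boundary : ∀ e ∈ edges, seg e ⊆ frontier carrier
  /-- Each edge is axis-parallel; points in its relative interior are reflex
  edge points if the edge is reflex, and convex edge points otherwise. -/
  edges_classified : ∀ e ∈ edges, ∃ i : Fin 3,
    (∀ j, j ≠ i → e.1 j = e.2 j) ∧
    ∀ p ∈ openSegment ℝ e.1 e.2,
      (e ∈ reflexEdges → ReflexEdgePoint carrier p i) ∧
      (e ∉ reflexEdges → ConvexEdgePoint carrier p i)
  /-- Every edge point of the boundary lies on some listed edge. -/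
  edges_complete : ∀ p : Pt, ∀ i : Fin 3,
    (ConvexEdgePoint carrier p i ∨ ReflexEdgePoint carrier p i) →
    ∃ e ∈ edges, p ∈ seg e
  /-- Distinct listed edges are distinct maximal segments: they share at most one point. -/
  edges_maximal : ∀ e ∈ edges, ∀ f ∈ edges, e ≠ f → (seg e ∩ seg f).Subsingleton
  /-- The genus of the boundary surface of the polyhedron. -/
  genus : ℕ

/-- A set of `ℝ³` is a **prism**: the extrusion of a plane figure along one
of the coordinate directions. -/
def IsPrismSet (S : Set Pt) : Prop :=
  ∃ i : Fin 3, ∃ a b : ℝ, a < b ∧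
    (∀ x ∈ S, a ≤ x i ∧ x i ≤ b) ∧
    (∀ x ∈ S, ∀ t : ℝ, a ≤ t → t ≤ b → Function.update x i t ∈ S)

/-- A **monotone orthogonal polyhedron**: a prism whose intersection with
every vertical line is empty or a single segment (i.e. convex). -/
def OrthoPolyhedron.IsMonotone (P : OrthoPolyhedron) : Prop :=
  IsPrismSet P.carrier ∧
    ∀ a b : ℝ, Convex ℝ (P.carrier ∩ {x : Pt | x 0 = a ∧ x 1 = b})

/-- A **2-reflex orthogonal polyhedron**: an orthogonal polyhedron whose
reflex edges lie in at most two directions; without loss of generality all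
of them are horizontal (and hence, being axis-parallel, lie in the two
horizontal coordinate directions).  It comes with its canonical partition
into **bricks**: maximal cuboids, any two of which are disjoint or touch
at their top/bottom faces. -/
structure TwoReflexPolyhedron extends OrthoPolyhedron where
  reflex_horizontal : ∀ e ∈ reflexEdges, Horizontal e
  /-- The bricks of the canonical partition, each given by a pair of opposite corners. -/
  bricks : Finset (Pt × Pt)
  bricks_proper : ∀ B ∈ bricks, ∀ i, B.1 i < B.2 i
  bricks_cover : carrier = ⋃ B ∈ bricks, box B.1 B.2
  bricks_disjoint : ∀ B ∈ bricks, ∀ B' ∈ bricks, B ≠ B' →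
    interior (box B.1 B.2) ∩ interior (box B'.1 B'.2) = ∅
  bricks_contact : ∀ B ∈ bricks, ∀ B' ∈ bricks, B ≠ B' →
    box B.1 B.2 ∩ box B'.1 B'.2 = ∅ ∨ B.2 2 = B'.1 2 ∨ B'.2 2 = B.1 2

/-- The corner of a horizontal rectangle `R` adjacent to `R.1` in the `x`-direction. -/
def corner10 (R : Pt × Pt) : Pt := fun i => if i = 0 then R.2 0 else R.1 i

/-- The corner of a horizontal rectangle `R` adjacent to `R.1` in the `y`-direction. -/
def corner01 (R : Pt × Pt) : Pt := fun i => if i = 1 then R.2 1 else R.1 i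

/-- A nondegenerate horizontal rectangle, given by two opposite corners. -/
def IsHorizRect (R : Pt × Pt) : Prop :=
  R.1 0 < R.2 0 ∧ R.1 1 < R.2 1 ∧ R.1 2 = R.2 2

/-- The boundary of a horizontal rectangle: the union of its four sides. -/
def rectBoundary (R : Pt × Pt) : Set Pt :=
  segment ℝ R.1 (corner10 R) ∪ segment ℝ (corner10 R) R.2 ∪
    segment ℝ (corner01 R) R.2 ∪ segment ℝ R.1 (corner01 R)

namespace TwoReflexPolyhedron

variable (P : TwoReflexPolyhedron)

/-- Brick `B'` is attached to the top face of brick `B` (along a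
two-dimensional horizontal contact rectangle). -/
def AttachedAbove (B B' : Pt × Pt) : Prop :=
  B ∈ P.bricks ∧ B' ∈ P.bricks ∧ B ≠ B' ∧ B.2 2 = B'.1 2 ∧
    ∃ R : Pt × Pt, IsHorizRect R ∧ box R.1 R.2 = box B.1 B.2 ∩ box B'.1 B'.2

/-- `R` is a **contact rectangle** of the polyhedron: the (two-dimensional,
horizontal) intersection of two adjacent bricks. -/
def IsContactRect (R : Pt × Pt) : Prop :=
  IsHorizRect R ∧ ∃ B B' : Pt × Pt, P.AttachedAbove B B' ∧
    box R.1 R.2 = box B.1 B.2 ∩ box B'.1 B'.2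

/-- The polyhedron has a reflex edge with endpoints `a` and `b`. -/
def HasReflexEdge (a b : Pt) : Prop :=
  ∃ e ∈ P.reflexEdges, seg e = segment ℝ a b

/-- A **collar**: a contact rectangle whose boundary consists of four
reflex edges of the polyhedron. -/
def IsCollar (R : Pt × Pt) : Prop :=
  P.IsContactRect R ∧
    P.HasReflexEdge R.1 (corner10 R) ∧ P.HasReflexEdge (corner10 R) R.2 ∧
    P.HasReflexEdge (corner01 R) R.2 ∧ P.HasReflexEdge R.1 (corner01 R)

/-- The number of collars of the polyhedron. -/
def numCollars : ℕ := {R : Pt × Pt | P.IsCollar R}.ncard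

/-- A contact rectangle is **primitive** if exactly one reflex edge of the
polyhedron lies on its boundary. -/
def IsPrimitive (R : Pt × Pt) : Prop :=
  P.IsContactRect R ∧
    {e ∈ (↑P.reflexEdges : Set (Pt × Pt)) | seg e ⊆ rectBoundary R}.ncard = 1

/-- A **stack**: a 2-reflex orthogonal polyhedron all of whose contact
rectangles are primitive. -/
def IsStack : Prop := ∀ R : Pt × Pt, P.IsContactRect R → P.IsPrimitive R

/-- The set of bricks `S` forms a **castle** with base brick `base`: every
brick of `S` has zero or two bricks of `S` attached to its top face, and
every brick of `S` other than `base` has exactly one brick of `S` attached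
to its bottom face, while `base` has none. -/
def CastleOn (S : Set (Pt × Pt)) (base : Pt × Pt) : Prop :=
  base ∈ S ∧ S ⊆ ↑P.bricks ∧
    (∀ B ∈ S, {B' ∈ S | P.AttachedAbove B B'}.ncard = 0 ∨
      {B' ∈ S | P.AttachedAbove B B'}.ncard = 2) ∧
    (∀ B ∈ S, B ≠ base → {B' ∈ S | P.AttachedAbove B' B}.ncard = 1) ∧
    {B' ∈ S | P.AttachedAbove B' base}.ncard = 0

/-- The set of bricks `S` forms an **upside-down castle** with base brick
`base` (its topmost brick). -/
def CastleOnDown (S : Set (Pt × Pt)) (base : Pt × Pt) : Prop :=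
  base ∈ S ∧ S ⊆ ↑P.bricks ∧
    (∀ B ∈ S, {B' ∈ S | P.AttachedAbove B' B}.ncard = 0 ∨
      {B' ∈ S | P.AttachedAbove B' B}.ncard = 2) ∧
    (∀ B ∈ S, B ≠ base → {B' ∈ S | P.AttachedAbove B B'}.ncard = 1) ∧
    {B' ∈ S | P.AttachedAbove base B'}.ncard = 0

/-- A **castle**: a stack whose brick set forms a castle. -/
def IsCastle : Prop := P.IsStack ∧ ∃ base : Pt × Pt, P.CastleOn ↑P.bricks base

/-- A **double castle**: a stack obtained by attaching the base brick of an
upside-down castle to the base brick of a castle via a primitive contact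
rectangle. -/
def IsDoubleCastle : Prop :=
  P.IsStack ∧ ∃ (S₁ S₂ : Set (Pt × Pt)) (b₁ b₂ : Pt × Pt),
    S₁ ∪ S₂ = ↑P.bricks ∧ Disjoint S₁ S₂ ∧
    P.CastleOnDown S₁ b₁ ∧ P.CastleOn S₂ b₂ ∧ P.AttachedAbove b₁ b₂

end TwoReflexPolyhedron

/-! ### Auxiliary lemmas for `castle_even_reflex` -/

namespace CastleAux

open Set

lemma mem_box {lo hi x : Pt} : x ∈ box lo hi ↔ ∀ m, lo m ≤ x m ∧ x m ≤ hi m := Iff.rfl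

lemma box_eq_pi (lo hi : Pt) :
    box lo hi = Set.pi Set.univ (fun m => Set.Icc (lo m) (hi m)) := by
  ext x; simp [box, Set.mem_pi, Set.mem_Icc, forall_and, Pi.le_def]

lemma convex_box (lo hi : Pt) : Convex ℝ (box lo hi) := by
  rw [box_eq_pi]; exact convex_pi (fun i _ => convex_Icc _ _)

lemma interior_box (lo hi : Pt) :
    interior (box lo hi) = {x | ∀ m, lo m < x m ∧ x m < hi m} := by
  rw [box_eq_pi, interior_pi_set Set.finite_univ]
  ext x; simp [Set.mem_pi, forall_and, Pi.lt_def]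

/-- Pigeonhole: if every index has a brick satisfying `Q`, some brick works
for arbitrarily large indices. -/
lemma pig (P : TwoReflexPolyhedron) (Q : Pt × Pt → ℕ → Prop)
    (hf : ∀ n, ∃ B ∈ P.bricks, Q B n) :
    ∃ B ∈ P.bricks, ∀ N, ∃ n, N ≤ n ∧ Q B n := by
  choose g hg1 hg2 using hf
  obtain ⟨⟨B, hB⟩, hfib⟩ :=
    Finite.exists_infinite_fiber (fun n => (⟨g n, hg1 n⟩ : {B // B ∈ P.bricks}))
  have hsub : (fun n => (⟨g n, hg1 n⟩ : {B // B ∈ P.bricks})) ⁻¹' {⟨B, hB⟩} ⊆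
      {n : ℕ | g n = B} := by
    intro n hn
    have h2 : (⟨g n, hg1 n⟩ : {B // B ∈ P.bricks}) = ⟨B, hB⟩ := hn
    simpa using congrArg Subtype.val h2
  have hinf : {n : ℕ | g n = B}.Infinite :=
    Set.Infinite.mono hsub (Set.infinite_coe_iff.mp hfib)
  refine ⟨B, hB, fun N => ?_⟩
  by_contra hno
  push_neg at hno
  have hss : {n : ℕ | g n = B} ⊆ Set.Iio N := by
    intro n hn
    by_contra hlt
    exact hno n (le_of_not_gt hlt) (hn ▸ hg2 n)
  exact hinf ((Set.finite_Iio N).subset hss)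

lemma box_subset_carrier (P : TwoReflexPolyhedron) {B : Pt × Pt} (hB : B ∈ P.bricks) :
    box B.1 B.2 ⊆ P.carrier := by
  rw [P.bricks_cover]
  intro y hy
  exact Set.mem_biUnion hB hy

/-- A point interior to the carrier whose height is not a brick face height
lies in the interior of some brick. -/
lemma AV (P : TwoReflexPolyhedron) (x : Pt) (hx : x ∈ interior P.carrier)
    (hZ : ∀ B ∈ P.bricks, x 2 ≠ B.1 2 ∧ x 2 ≠ B.2 2) :
    ∃ B ∈ P.bricks, ∀ m, B.1 m < x m ∧ x m < B.2 m := by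
  obtain ⟨r, hr, hrball⟩ := Metric.isOpen_iff.mp isOpen_interior x hx
  have hrc : Metric.ball x r ⊆ P.carrier := hrball.trans interior_subset
  have helper : ∀ (m : Fin 3) (σ : ℝ), (σ = 1 ∨ σ = -1) →
      ∃ C ∈ P.bricks, x ∈ box C.1 C.2 ∧
        (σ = 1 → x m < C.2 m) ∧ (σ = -1 → C.1 m < x m) := by
    intro m σ hσ
    have habs : |σ| = 1 := by rcases hσ with rfl | rfl <;> norm_num
    have hQ : ∀ n : ℕ, ∃ C ∈ P.bricks,
        Function.update x m (x m + σ * (r / (2 * (n + 1)))) ∈ box C.1 C.2 := by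
      intro n
      have hcpos : (0:ℝ) < r / (2 * (n + 1)) := by positivity
      have hmem : Function.update x m (x m + σ * (r / (2 * (n + 1)))) ∈ P.carrier := by
        apply hrc
        rw [Metric.mem_ball, dist_pi_lt_iff hr]
        intro l
        rw [Real.dist_eq]
        by_cases hl : l = m
        · subst hl
          rw [Function.update_self,
            show x l + σ * (r / (2 * ((n:ℝ) + 1))) - x l = σ * (r / (2 * ((n:ℝ)+1))) from by
              ring,
            abs_mul, habs, one_mul, abs_of_pos hcpos, div_lt_iff₀ (by positivity)]
          have hn0 : (0:ℝ) ≤ (n:ℝ) := Nat.cast_nonneg n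
          nlinarith
        · rw [Function.update_of_ne hl]
          simpa using hr
      rw [P.bricks_cover] at hmem
      simpa using hmem
    obtain ⟨C, hC, hCn⟩ := pig P _ hQ
    obtain ⟨n0, -, hn0⟩ := hCn 0
    have h1n0 := (hn0 m).1
    have h2n0 := (hn0 m).2
    rw [Function.update_self] at h1n0 h2n0
    refine ⟨C, hC, ?_, ?_, ?_⟩
    · -- x ∈ box C
      intro l
      by_cases hl : l = m
      · subst hl
        have hbig : ∀ η : ℝ, 0 < η → C.1 l ≤ x l + η ∧ x l - η ≤ C.2 l := by
          intro η hη
          obtain ⟨N, hN⟩ := exists_nat_gt (r / (2 * η))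
          obtain ⟨n, hnN, hn⟩ := hCn N
          have h1 := (hn l).1
          have h2 := (hn l).2
          rw [Function.update_self] at h1 h2
          have hsmall : r / (2 * (n + 1)) < η := by
            rw [div_lt_iff₀ (by positivity)]
            have hh : r / (2 * η) < (n:ℝ) + 1 := by
              calc r / (2*η) < (N:ℝ) := hN
              _ ≤ n := by exact_mod_cast hnN
              _ ≤ n + 1 := by linarith
            calc r = (r / (2*η)) * (2*η) := by field_simp
            _ < ((n:ℝ)+1) * (2*η) := by
                apply mul_lt_mul_of_pos_right hh (by positivity)
            _ = η * (2*((n:ℝ)+1)) := by ring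
          have hbd : |σ * (r / (2 * (n + 1)))| < η := by
            rw [abs_mul, habs, one_mul, abs_of_pos (by positivity)]
            exact hsmall
          rw [abs_lt] at hbd
          constructor <;> linarith [hbd.1, hbd.2]
        constructor
        · by_contra hcon
          push_neg at hcon
          have := (hbig ((C.1 l - x l) / 2) (by linarith)).1
          linarith
        · by_contra hcon
          push_neg at hcon
          have := (hbig ((x l - C.2 l) / 2) (by linarith)).2
          linarith
      · have h1 := (hn0 l).1
        have h2 := (hn0 l).2
        rw [Function.update_of_ne hl] at h1 h2
        exact ⟨h1, h2⟩
    · intro hσ1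
      have : 0 < σ * (r / (2 * (n0 + 1))) := by
        rw [hσ1, one_mul]; positivity
      linarith
    · intro hσ1
      have : σ * (r / (2 * (n0 + 1))) < 0 := by
        rw [hσ1]
        have : (0:ℝ) < r / (2 * ((n0:ℝ)+1)) := by positivity
        linarith
      linarith
  -- main argument
  have hxc : x ∈ P.carrier := interior_subset hx
  rw [P.bricks_cover] at hxc
  simp only [Set.mem_iUnion] at hxc
  obtain ⟨B, hB, hxB⟩ := hxc
  refine ⟨B, hB, fun m => ⟨?_, ?_⟩⟩
  · rcases lt_or_eq_of_le ((hxB m).1) with h | h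
    · exact h
    · exfalso
      obtain ⟨C, hC, hxC, -, hC1⟩ := helper m (-1) (Or.inr rfl)
      have hC1 := hC1 rfl
      have hne : C ≠ B := by
        intro hCB
        rw [hCB] at hC1
        linarith [h]
      have hnonempty : ¬ (box C.1 C.2 ∩ box B.1 B.2 = ∅) := by
        intro hemp
        rw [Set.eq_empty_iff_forall_notMem] at hemp
        exact hemp x ⟨hxC, hxB⟩
      rcases P.bricks_contact C hC B hB hne with hemp | hcc | hcc
      · exact hnonempty hemp
      · have h1 := (hxC 2).2
        have h2 := (hxB 2).1
        exact (hZ B hB).1 (by linarith)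
      · have h1 := (hxB 2).2
        have h2 := (hxC 2).1
        exact (hZ B hB).2 (by linarith)
  · rcases lt_or_eq_of_le ((hxB m).2) with h | h
    · exact h
    · exfalso
      obtain ⟨C, hC, hxC, hC2, -⟩ := helper m 1 (Or.inl rfl)
      have hC2 := hC2 rfl
      have hne : C ≠ B := by
        intro hCB
        rw [hCB] at hC2
        linarith [h]
      have hnonempty : ¬ (box C.1 C.2 ∩ box B.1 B.2 = ∅) := by
        intro hemp
        rw [Set.eq_empty_iff_forall_notMem] at hemp
        exact hemp x ⟨hxC, hxB⟩
      rcases P.bricks_contact C hC B hB hne with hemp | hcc | hcc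
      · exact hnonempty hemp
      · have h1 := (hxC 2).2
        have h2 := (hxB 2).1
        exact (hZ B hB).1 (by linarith)
      · have h1 := (hxB 2).2
        have h2 := (hxC 2).1
        exact (hZ B hB).2 (by linarith)


/-- Construction of a brick from an approach direction `v`. -/
lemma L2a (P : TwoReflexPolyhedron) (p v : Pt) (hv2 : v 2 ≠ 0)
    (hvb : ∀ m, |v m| ≤ 1) (δ0 : ℝ) (hδ0 : 0 < δ0)
    (H : ∀ δ : ℝ, 0 < δ → δ ≤ δ0 → (p + δ • v) ∈ interior P.carrier) :
    ∃ B ∈ P.bricks, p ∈ box B.1 B.2 ∧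
      (∀ m, v m = 0 → B.1 m < p m ∧ p m < B.2 m) ∧
      (∀ m, 0 < v m → p m < B.2 m) ∧ (∀ m, v m < 0 → B.1 m < p m) := by
  have hseq : ∀ n : ℕ, ∃ δ : ℝ, 0 < δ ∧ δ ≤ δ0 ∧ δ ≤ 1/(n+1) ∧
      ∀ B ∈ P.bricks, p 2 + δ * v 2 ≠ B.1 2 ∧ p 2 + δ * v 2 ≠ B.2 2 := by
    intro n
    have hu0 : (0:ℝ) < min δ0 (1/(n+1)) := lt_min hδ0 (by positivity)
    have hio : (Set.Ioo (0:ℝ) (min δ0 (1/(n+1)))).Infinite := Set.infinite_coe_iff.mp (Set.Ioo.infinite hu0)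
    have hfin : {δ : ℝ | ∃ B ∈ P.bricks,
        p 2 + δ * v 2 = B.1 2 ∨ p 2 + δ * v 2 = B.2 2}.Finite := by
      have hsub : {δ : ℝ | ∃ B ∈ P.bricks,
          p 2 + δ * v 2 = B.1 2 ∨ p 2 + δ * v 2 = B.2 2} ⊆
          ⋃ B ∈ P.bricks, ({(B.1 2 - p 2)/(v 2)} ∪ {(B.2 2 - p 2)/(v 2)}) := by
        rintro δ ⟨B, hB, h | h⟩ <;>
        · refine Set.mem_biUnion hB ?_
          simp only [Set.mem_union, Set.mem_singleton_iff]
          first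
          | exact Or.inl (by field_simp; linarith)
          | exact Or.inr (by field_simp; linarith)
      refine Set.Finite.subset ?_ hsub
      exact Set.Finite.biUnion P.bricks.finite_toSet
        (fun B _ => (Set.finite_singleton _).union (Set.finite_singleton _))
    obtain ⟨δ, hδmem⟩ := (hio.diff hfin).nonempty
    refine ⟨δ, hδmem.1.1, le_trans hδmem.1.2.le (min_le_left _ _),
      le_trans hδmem.1.2.le (min_le_right _ _), ?_⟩
    intro B hB
    constructor <;> intro hc <;> exact hδmem.2 ⟨B, hB, by tauto⟩
  choose δs hδpos hδle hδsmall hδZ using hseq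
  have hQ : ∀ n, ∃ B ∈ P.bricks,
      ∀ m, B.1 m < (p + δs n • v) m ∧ (p + δs n • v) m < B.2 m := by
    intro n
    refine AV P _ (H _ (hδpos n) (hδle n)) ?_
    intro B hB
    have h2 : (p + δs n • v) 2 = p 2 + δs n * v 2 := by
      simp [Pi.add_apply, Pi.smul_apply, smul_eq_mul]
    rw [h2]
    exact hδZ n B hB
  obtain ⟨B, hB, hBn⟩ := pig P _ hQ
  have key : ∀ N : ℕ, ∃ n, N ≤ n ∧
      ∀ m, B.1 m < p m + δs n * v m ∧ p m + δs n * v m < B.2 m := by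
    intro N
    obtain ⟨n, hn, hprop⟩ := hBn N
    exact ⟨n, hn, fun m => by simpa [Pi.add_apply, Pi.smul_apply, smul_eq_mul] using hprop m⟩
  obtain ⟨n0, -, hkey0⟩ := key 0
  have hsmallb : ∀ (n : ℕ) (m : Fin 3), |δs n * v m| ≤ 1/(n+1) := by
    intro n m
    rw [abs_mul, abs_of_pos (hδpos n)]
    calc δs n * |v m| ≤ δs n * 1 := by
          have := hvb m
          nlinarith [hδpos n, abs_nonneg (v m)]
    _ ≤ 1/(n+1) := by simpa using hδsmall n
  have hbox : p ∈ box B.1 B.2 := by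
    intro m
    constructor
    · by_contra hcon
      push_neg at hcon
      obtain ⟨N, hN⟩ := exists_nat_gt (1/(B.1 m - p m))
      obtain ⟨n, hnN, hkey⟩ := key N
      have h1 := (hkey m).1
      have hb := hsmallb n m
      rw [abs_le] at hb
      have hdpos : (0:ℝ) < B.1 m - p m := by linarith
      have hNpos : (0:ℝ) < (N:ℝ) := lt_trans (one_div_pos.mpr hdpos) hN
      have : (1:ℝ)/(n+1) < B.1 m - p m := by
        rw [div_lt_iff₀ (show (0:ℝ) < (n:ℝ)+1 by positivity)]
        have h1N : 1 / (B.1 m - p m) < (N:ℝ) := hN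
        have hle : (N:ℝ) ≤ (n:ℝ) + 1 := by
          have : (N:ℝ) ≤ (n:ℝ) := by exact_mod_cast hnN
          linarith
        rw [div_lt_iff₀ (by linarith)] at h1N
        nlinarith
      linarith [hb.1, hb.2]
    · by_contra hcon
      push_neg at hcon
      obtain ⟨N, hN⟩ := exists_nat_gt (1/(p m - B.2 m))
      obtain ⟨n, hnN, hkey⟩ := key N
      have h1 := (hkey m).2
      have hb := hsmallb n m
      rw [abs_le] at hb
      have hdpos : (0:ℝ) < p m - B.2 m := by linarith
      have hNpos : (0:ℝ) < (N:ℝ) := lt_trans (one_div_pos.mpr hdpos) hN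
      have : (1:ℝ)/(n+1) < p m - B.2 m := by
        rw [div_lt_iff₀ (show (0:ℝ) < (n:ℝ)+1 by positivity)]
        have h1N : 1 / (p m - B.2 m) < (N:ℝ) := hN
        have hle : (N:ℝ) ≤ (n:ℝ) + 1 := by
          have : (N:ℝ) ≤ (n:ℝ) := by exact_mod_cast hnN
          linarith
        rw [div_lt_iff₀ (by linarith)] at h1N
        nlinarith
      linarith [hb.1, hb.2]
  refine ⟨B, hB, hbox, ?_, ?_, ?_⟩
  · intro m hm
    have h1 := (hkey0 m).1
    have h2 := (hkey0 m).2
    rw [hm] at h1 h2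
    constructor <;> linarith
  · intro m hm
    have h2 := (hkey0 m).2
    nlinarith [hδpos n0]
  · intro m hm
    have h1 := (hkey0 m).1
    nlinarith [hδpos n0]

/-- Normalized form of a reflex edge point with horizontal direction. -/
lemma L1 {P : TwoReflexPolyhedron} {p : Pt} {i : Fin 3} (hi2 : i ≠ 2)
    (hrp : ReflexEdgePoint P.carrier p i) :
    ∃ ε > (0:ℝ), ∃ h : Fin 3, h ≠ i ∧ h ≠ 2 ∧ ∃ σ τ : ℝ,
      (σ = 1 ∨ σ = -1) ∧ (τ = 1 ∨ τ = -1) ∧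
      P.carrier ∩ Metric.ball p ε =
        {x ∈ Metric.ball p ε | 0 ≤ σ * (x h - p h) ∨ 0 ≤ τ * (x 2 - p 2)} := by
  obtain ⟨ε, hε, j, k, hji, hki, hjk, s, t, hs, ht, heq⟩ := hrp
  rcases eq_or_ne k 2 with hk2 | hk2
  · subst hk2
    exact ⟨ε, hε, j, hji, hjk, s, t, hs, ht, heq⟩
  · rcases eq_or_ne j 2 with hj2 | hj2
    · subst hj2
      refine ⟨ε, hε, k, hki, hk2, t, s, ht, hs, ?_⟩
      rw [heq]
      ext x
      simp only [Set.mem_setOf_eq]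
      tauto
    · exfalso
      have v1 : i.val < 3 := i.isLt
      have v2 : j.val < 3 := j.isLt
      have v3 : k.val < 3 := k.isLt
      have n1 : j.val ≠ i.val := fun hc => hji (Fin.ext hc)
      have n2 : k.val ≠ i.val := fun hc => hki (Fin.ext hc)
      have n3 : j.val ≠ k.val := fun hc => hjk (Fin.ext hc)
      have n4 : i.val ≠ 2 := fun hc => hi2 (Fin.ext (by rw [hc]; rfl))
      have n5 : j.val ≠ 2 := fun hc => hj2 (Fin.ext (by rw [hc]; rfl))
      have n6 : k.val ≠ 2 := fun hc => hk2 (Fin.ext (by rw [hc]; rfl))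
      omega

set_option maxHeartbeats 2000000 in
/-- The main local structure lemma: near a reflex edge point there are two
bricks, one below and one above the horizontal plane through the point,
with controlled faces. -/
lemma L2 {P : TwoReflexPolyhedron} {p : Pt} {i : Fin 3} (hi2 : i ≠ 2)
    (hrp : ReflexEdgePoint P.carrier p i) :
    ∃ B B' : Pt × Pt, ∃ h : Fin 3, B ∈ P.bricks ∧ B' ∈ P.bricks ∧ h ≠ i ∧ h ≠ 2 ∧
      B.2 2 = p 2 ∧ B'.1 2 = p 2 ∧ B.1 2 < p 2 ∧ p 2 < B'.2 2 ∧
      p ∈ box B.1 B.2 ∧ p ∈ box B'.1 B'.2 ∧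
      B.1 i < p i ∧ p i < B.2 i ∧ B'.1 i < p i ∧ p i < B'.2 i ∧
      ((max (B.1 h) (B'.1 h) = p h ∧ p h < min (B.2 h) (B'.2 h)) ∨
       (max (B.1 h) (B'.1 h) < p h ∧ min (B.2 h) (B'.2 h) = p h)) := by
  obtain ⟨ε, hε, h, hhi, hh2, σ, τ, hσ, hτ, heq⟩ := L1 hi2 hrp
  have h2h : (2:Fin 3) ≠ h := Ne.symm hh2
  have hih : i ≠ h := Ne.symm hhi
  have hσσ : σ * σ = 1 := by rcases hσ with rfl | rfl <;> norm_num
  have hττ : τ * τ = 1 := by rcases hτ with rfl | rfl <;> norm_num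
  have hτ30 : τ ≠ 0 := by rcases hτ with rfl | rfl <;> norm_num
  have habsσ : |σ| = 1 := by rcases hσ with rfl | rfl <;> norm_num
  have habsτ : |τ| = 1 := by rcases hτ with rfl | rfl <;> norm_num
  have hcover : ∀ l : Fin 3, l = i ∨ l = h ∨ l = (2:Fin 3) := by
    intro l
    have v1 : i.val < 3 := i.isLt
    have v2 : h.val < 3 := h.isLt
    have v3 : l.val < 3 := l.isLt
    have n1 : h.val ≠ i.val := fun hc => hhi (Fin.ext hc)
    have n2 : i.val ≠ 2 := fun hc => hi2 (Fin.ext (by rw [hc]; rfl))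
    have n3 : h.val ≠ 2 := fun hc => hh2 (Fin.ext (by rw [hc]; rfl))
    have hv : l.val = i.val ∨ l.val = h.val ∨ l.val = 2 := by omega
    rcases hv with hc | hc | hc
    · exact Or.inl (Fin.ext hc)
    · exact Or.inr (Or.inl (Fin.ext hc))
    · exact Or.inr (Or.inr (Fin.ext (by rw [hc]; rfl)))
  have hball : ∀ y : Pt, (∀ l, |y l - p l| < ε) → y ∈ Metric.ball p ε := by
    intro y hy
    rw [Metric.mem_ball, dist_pi_lt_iff hε]
    intro l
    rw [Real.dist_eq]
    exact hy l
  have hsolid : ∀ x : Pt, x ∈ Metric.ball p ε →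
      (0 < σ * (x h - p h) ∨ 0 < τ * (x 2 - p 2)) → x ∈ interior P.carrier := by
    intro x hxb hxc
    have hopen : IsOpen (Metric.ball p ε ∩
        ((fun x : Pt => σ * (x h - p h)) ⁻¹' Set.Ioi 0 ∪
         (fun x : Pt => τ * (x 2 - p 2)) ⁻¹' Set.Ioi 0)) := by
      apply Metric.isOpen_ball.inter
      apply IsOpen.union
      · exact isOpen_Ioi.preimage (by fun_prop)
      · exact isOpen_Ioi.preimage (by fun_prop)
    have hsub : Metric.ball p ε ∩
        ((fun x : Pt => σ * (x h - p h)) ⁻¹' Set.Ioi 0 ∪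
         (fun x : Pt => τ * (x 2 - p 2)) ⁻¹' Set.Ioi 0) ⊆ P.carrier := by
      intro y hy
      have hmem : y ∈ {x ∈ Metric.ball p ε | 0 ≤ σ * (x h - p h) ∨ 0 ≤ τ * (x 2 - p 2)} := by
        refine ⟨hy.1, ?_⟩
        rcases hy.2 with hc | hc
        · exact Or.inl (le_of_lt hc)
        · exact Or.inr (le_of_lt hc)
      rw [← heq] at hmem
      exact hmem.1
    exact interior_maximal hsub hopen ⟨hxb, hxc⟩
  have hforb : ∀ x : Pt, x ∈ Metric.ball p ε → σ * (x h - p h) < 0 → τ * (x 2 - p 2) < 0 →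
      x ∉ P.carrier := by
    intro x hxb h1 h2 hxc
    have hmem : x ∈ P.carrier ∩ Metric.ball p ε := ⟨hxc, hxb⟩
    rw [heq] at hmem
    rcases hmem.2 with hc | hc <;> linarith
  -- brick N on the solid z-side
  set vN : Pt := fun l => if l = (2:Fin 3) then τ else 0 with hvN
  have hvN2 : vN 2 = τ := by simp [hvN]
  have hvNi : vN i = 0 := by simp [hvN, hi2]
  have hvNh : vN h = 0 := by simp [hvN, hh2]
  have hvNb : ∀ m, |vN m| ≤ 1 := by
    intro m
    by_cases hm : m = (2:Fin 3)
    · simp [hvN, hm, habsτ]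
    · simp [hvN, hm]
  obtain ⟨N, hN, hpN, hN0, hNpos, hNneg⟩ := L2a P p vN (by rw [hvN2]; exact hτ30) hvNb
      (ε/2) (by linarith) (by
    intro δ hδ0 hδle
    apply hsolid
    · apply hball
      intro l
      have hl : (p + δ • vN) l - p l = δ * vN l := by
        simp only [Pi.add_apply, Pi.smul_apply, smul_eq_mul]; ring
      rw [hl, abs_mul, abs_of_pos hδ0]
      have := hvNb l
      nlinarith
    · right
      have hl : (p + δ • vN) 2 - p 2 = δ * τ := by
        simp only [Pi.add_apply, Pi.smul_apply, smul_eq_mul, hvN2]; ring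
      rw [hl]
      nlinarith)
  have hNi : N.1 i < p i ∧ p i < N.2 i := hN0 i hvNi
  have hNh : N.1 h < p h ∧ p h < N.2 h := hN0 h hvNh
  -- brick M on the solid h-side
  set vM : Pt := fun l => if l = h then σ else if l = (2:Fin 3) then -τ else 0 with hvM
  have hvMh : vM h = σ := by simp [hvM]
  have hvM2 : vM 2 = -τ := by simp [hvM, h2h]
  have hvMi : vM i = 0 := by simp [hvM, hih, hi2]
  have hvMb : ∀ m, |vM m| ≤ 1 := by
    intro m
    by_cases hm : m = h
    · simp [hvM, hm, habsσ]
    · by_cases hm2 : m = (2:Fin 3)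
      · simp [hvM, hm, hm2, h2h, abs_neg, habsτ]
      · simp [hvM, hm, hm2]
  obtain ⟨M, hM, hpM, hM0, hMpos, hMneg⟩ := L2a P p vM
      (by rw [hvM2]; simpa using hτ30) hvMb
      (ε/2) (by linarith) (by
    intro δ hδ0 hδle
    apply hsolid
    · apply hball
      intro l
      have hl : (p + δ • vM) l - p l = δ * vM l := by
        simp only [Pi.add_apply, Pi.smul_apply, smul_eq_mul]; ring
      rw [hl, abs_mul, abs_of_pos hδ0]
      have := hvMb l
      nlinarith
    · left
      have hl : (p + δ • vM) h - p h = δ * σ := by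
        simp only [Pi.add_apply, Pi.smul_apply, smul_eq_mul, hvMh]; ring
      rw [hl]
      nlinarith)
  have hMi : M.1 i < p i ∧ p i < M.2 i := hM0 i hvMi
  clear hsolid hvNb hvMb hN0 hM0
  rcases hτ with rfl | rfl
  · -- τ = 1 : solid below exists everywhere, M is the lower brick, N the upper
    have hN2top : p 2 < N.2 2 := hNpos 2 (by rw [hvN2]; norm_num)
    have hM2bot : M.1 2 < p 2 := hMneg 2 (by rw [hvM2]; norm_num)
    rcases hσ with rfl | rfl
    · -- σ = 1
      have hMh2 : p h < M.2 h := hMpos h (by rw [hvMh]; norm_num)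
      have hFK : ∀ K : Pt × Pt, K ∈ P.bricks → p ∈ box K.1 K.2 →
          K.1 h < p h → K.1 2 < p 2 → False := by
        intro K hK hpK hKh hK2
        set a := (max (K.1 h) (p h - ε/3) + p h)/2 with ha
        set b := (max (K.1 2) (p 2 - ε/3) + p 2)/2 with hb
        have hmh := max_lt hKh (show p h - ε/3 < p h by linarith)
        have hm2 := max_lt hK2 (show p 2 - ε/3 < p 2 by linarith)
        have ha1 : K.1 h < a := by
          have := le_max_left (K.1 h) (p h - ε/3); rw [ha]; linarith
        have ha2 : a < p h := by rw [ha]; linarith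
        have ha3 : p h - ε/3 < a := by
          have := le_max_right (K.1 h) (p h - ε/3); rw [ha]; linarith
        have hb1 : K.1 2 < b := by
          have := le_max_left (K.1 2) (p 2 - ε/3); rw [hb]; linarith
        have hb2 : b < p 2 := by rw [hb]; linarith
        have hb3 : p 2 - ε/3 < b := by
          have := le_max_right (K.1 2) (p 2 - ε/3); rw [hb]; linarith
        set w : Pt := fun l => if l = h then a else if l = (2:Fin 3) then b else p l with hw
        have hwh : w h = a := by simp [hw]
        have hw2 : w 2 = b := by simp [hw, h2h]
        have hwl : ∀ l, l ≠ h → l ≠ (2:Fin 3) → w l = p l := by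
          intro l h1 h2; simp [hw, h1, h2]
        have hwbox : w ∈ box K.1 K.2 := by
          intro l
          rcases hcover l with rfl | rfl | rfl
          · rw [hwl l hih hi2]; exact hpK l
          · rw [hwh]; exact ⟨ha1.le, le_trans ha2.le (hpK l).2⟩
          · rw [hw2]; exact ⟨hb1.le, le_trans hb2.le (hpK 2).2⟩
        have hwball : w ∈ Metric.ball p ε := by
          apply hball
          intro l
          rcases hcover l with rfl | rfl | rfl
          · rw [hwl l hih hi2]; simpa using hε
          · rw [hwh, abs_lt]; constructor <;> linarith
          · rw [hw2, abs_lt]; constructor <;> linarith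
        exact hforb w hwball (by rw [hwh]; linarith) (by rw [hw2]; linarith)
          (box_subset_carrier P hK hwbox)
      have hN12 : N.1 2 = p 2 := by
        rcases lt_or_eq_of_le (hpN 2).1 with hlt | he
        · exact absurd (hFK N hN hpN hNh.1 hlt) (fun hf => hf)
        · exact he
      have hM1h : M.1 h = p h := by
        rcases lt_or_eq_of_le (hpM h).1 with hlt | he
        · exact absurd (hFK M hM hpM hlt hM2bot) (fun hf => hf)
        · exact he
      have hM22 : M.2 2 = p 2 := by
        rcases lt_or_eq_of_le (hpM 2).2 with hlt | he
        · exfalso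
          set c := min (M.2 h - p h) (N.2 h - p h) / 2 with hc
          set d := min (M.2 2 - p 2) (N.2 2 - p 2) / 2 with hd
          have hc0 : 0 < c := by
            rw [hc]
            have h1 : 0 < M.2 h - p h := by linarith
            have h2 : 0 < N.2 h - p h := by linarith [hNh.2]
            positivity
          have hd0 : 0 < d := by
            rw [hd]
            have h1 : 0 < M.2 2 - p 2 := by linarith
            have h2 : 0 < N.2 2 - p 2 := by linarith
            positivity
          have hcM : c < M.2 h - p h := by
            rw [hc]; have := min_le_left (M.2 h - p h) (N.2 h - p h); linarith
          have hcN : c < N.2 h - p h := by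
            rw [hc]; have := min_le_right (M.2 h - p h) (N.2 h - p h); linarith
          have hdM : d < M.2 2 - p 2 := by
            rw [hd]; have := min_le_left (M.2 2 - p 2) (N.2 2 - p 2); linarith
          have hdN : d < N.2 2 - p 2 := by
            rw [hd]; have := min_le_right (M.2 2 - p 2) (N.2 2 - p 2); linarith
          set y : Pt := fun l => if l = h then p h + c else if l = (2:Fin 3) then p 2 + d
            else p l with hy
          have hyh : y h = p h + c := by simp [hy]
          have hy2 : y 2 = p 2 + d := by simp [hy, h2h]
          have hyl : ∀ l, l ≠ h → l ≠ (2:Fin 3) → y l = p l := by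
            intro l h1 h2; simp [hy, h1, h2]
          have hyM : y ∈ interior (box M.1 M.2) := by
            rw [interior_box]
            intro l
            rcases hcover l with rfl | rfl | rfl
            · rw [hyl l hih hi2]; exact hMi
            · rw [hyh]; exact ⟨by rw [hM1h]; linarith, by linarith⟩
            · rw [hy2]; exact ⟨by linarith, by linarith⟩
          have hyN : y ∈ interior (box N.1 N.2) := by
            rw [interior_box]
            intro l
            rcases hcover l with rfl | rfl | rfl
            · rw [hyl l hih hi2]; exact hNi
            · rw [hyh]; exact ⟨by linarith [hNh.1], by linarith⟩
            · rw [hy2]; exact ⟨by rw [hN12]; linarith, by linarith⟩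
          have hMN : M ≠ N := by
            intro hMN
            rw [hMN, hN12] at hM2bot
            exact lt_irrefl _ hM2bot
          have hdisj := P.bricks_disjoint M hM N hN hMN
          rw [Set.eq_empty_iff_forall_notMem] at hdisj
          exact hdisj y ⟨hyM, hyN⟩
        · exact he.symm
      refine ⟨M, N, h, hM, hN, hhi, hh2, hM22, hN12, hM2bot, hN2top, hpM, hpN,
        hMi.1, hMi.2, hNi.1, hNi.2, Or.inl ⟨?_, lt_min hMh2 hNh.2⟩⟩
      rw [hM1h]
      exact max_eq_left hNh.1.le
    · -- σ = -1
      have hMh1 : M.1 h < p h := hMneg h (by rw [hvMh]; norm_num)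
      have hFK : ∀ K : Pt × Pt, K ∈ P.bricks → p ∈ box K.1 K.2 →
          p h < K.2 h → K.1 2 < p 2 → False := by
        intro K hK hpK hKh hK2
        set a := (p h + min (K.2 h) (p h + ε/3))/2 with ha
        set b := (max (K.1 2) (p 2 - ε/3) + p 2)/2 with hb
        have hmh := lt_min hKh (show p h < p h + ε/3 by linarith)
        have hm2 := max_lt hK2 (show p 2 - ε/3 < p 2 by linarith)
        have ha1 : a < K.2 h := by
          have := min_le_left (K.2 h) (p h + ε/3); rw [ha]; linarith
        have ha2 : p h < a := by rw [ha]; linarith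
        have ha3 : a < p h + ε/3 := by
          have := min_le_right (K.2 h) (p h + ε/3); rw [ha]; linarith
        have hb1 : K.1 2 < b := by
          have := le_max_left (K.1 2) (p 2 - ε/3); rw [hb]; linarith
        have hb2 : b < p 2 := by rw [hb]; linarith
        have hb3 : p 2 - ε/3 < b := by
          have := le_max_right (K.1 2) (p 2 - ε/3); rw [hb]; linarith
        set w : Pt := fun l => if l = h then a else if l = (2:Fin 3) then b else p l with hw
        have hwh : w h = a := by simp [hw]
        have hw2 : w 2 = b := by simp [hw, h2h]
        have hwl : ∀ l, l ≠ h → l ≠ (2:Fin 3) → w l = p l := by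
          intro l h1 h2; simp [hw, h1, h2]
        have hwbox : w ∈ box K.1 K.2 := by
          intro l
          rcases hcover l with rfl | rfl | rfl
          · rw [hwl l hih hi2]; exact hpK l
          · rw [hwh]; exact ⟨le_trans (hpK l).1 ha2.le, ha1.le⟩
          · rw [hw2]; exact ⟨hb1.le, le_trans hb2.le (hpK 2).2⟩
        have hwball : w ∈ Metric.ball p ε := by
          apply hball
          intro l
          rcases hcover l with rfl | rfl | rfl
          · rw [hwl l hih hi2]; simpa using hε
          · rw [hwh, abs_lt]; constructor <;> linarith
          · rw [hw2, abs_lt]; constructor <;> linarith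
        exact hforb w hwball (by rw [hwh]; linarith) (by rw [hw2]; linarith)
          (box_subset_carrier P hK hwbox)
      have hN12 : N.1 2 = p 2 := by
        rcases lt_or_eq_of_le (hpN 2).1 with hlt | he
        · exact absurd (hFK N hN hpN hNh.2 hlt) (fun hf => hf)
        · exact he
      have hM2h : M.2 h = p h := by
        rcases lt_or_eq_of_le (hpM h).2 with hlt | he
        · exact absurd (hFK M hM hpM hlt hM2bot) (fun hf => hf)
        · exact he.symm
      have hM22 : M.2 2 = p 2 := by
        rcases lt_or_eq_of_le (hpM 2).2 with hlt | he
        · exfalso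
          set c := min (p h - M.1 h) (p h - N.1 h) / 2 with hc
          set d := min (M.2 2 - p 2) (N.2 2 - p 2) / 2 with hd
          have hc0 : 0 < c := by
            rw [hc]
            have h1 : 0 < p h - M.1 h := by linarith
            have h2 : 0 < p h - N.1 h := by linarith [hNh.1]
            positivity
          have hd0 : 0 < d := by
            rw [hd]
            have h1 : 0 < M.2 2 - p 2 := by linarith
            have h2 : 0 < N.2 2 - p 2 := by linarith
            positivity
          have hcM : c < p h - M.1 h := by
            rw [hc]; have := min_le_left (p h - M.1 h) (p h - N.1 h); linarith
          have hcN : c < p h - N.1 h := by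
            rw [hc]; have := min_le_right (p h - M.1 h) (p h - N.1 h); linarith
          have hdM : d < M.2 2 - p 2 := by
            rw [hd]; have := min_le_left (M.2 2 - p 2) (N.2 2 - p 2); linarith
          have hdN : d < N.2 2 - p 2 := by
            rw [hd]; have := min_le_right (M.2 2 - p 2) (N.2 2 - p 2); linarith
          set y : Pt := fun l => if l = h then p h - c else if l = (2:Fin 3) then p 2 + d
            else p l with hy
          have hyh : y h = p h - c := by simp [hy]
          have hy2 : y 2 = p 2 + d := by simp [hy, h2h]
          have hyl : ∀ l, l ≠ h → l ≠ (2:Fin 3) → y l = p l := by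
            intro l h1 h2; simp [hy, h1, h2]
          have hyM : y ∈ interior (box M.1 M.2) := by
            rw [interior_box]
            intro l
            rcases hcover l with rfl | rfl | rfl
            · rw [hyl l hih hi2]; exact hMi
            · rw [hyh]; exact ⟨by linarith, by rw [hM2h]; linarith⟩
            · rw [hy2]; exact ⟨by linarith, by linarith⟩
          have hyN : y ∈ interior (box N.1 N.2) := by
            rw [interior_box]
            intro l
            rcases hcover l with rfl | rfl | rfl
            · rw [hyl l hih hi2]; exact hNi
            · rw [hyh]; exact ⟨by linarith, by linarith [hNh.2]⟩
            · rw [hy2]; exact ⟨by rw [hN12]; linarith, by linarith⟩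
          have hMN : M ≠ N := by
            intro hMN
            rw [hMN, hN12] at hM2bot
            exact lt_irrefl _ hM2bot
          have hdisj := P.bricks_disjoint M hM N hN hMN
          rw [Set.eq_empty_iff_forall_notMem] at hdisj
          exact hdisj y ⟨hyM, hyN⟩
        · exact he.symm
      refine ⟨M, N, h, hM, hN, hhi, hh2, hM22, hN12, hM2bot, hN2top, hpM, hpN,
        hMi.1, hMi.2, hNi.1, hNi.2, Or.inr ⟨max_lt hMh1 hNh.1, ?_⟩⟩
      rw [hM2h]
      exact min_eq_left hNh.2.le
  · -- τ = -1 : solid above exists everywhere, N is the lower brick, M the upper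
    have hN2bot : N.1 2 < p 2 := hNneg 2 (by rw [hvN2]; norm_num)
    have hM2top : p 2 < M.2 2 := hMpos 2 (by rw [hvM2]; norm_num)
    rcases hσ with rfl | rfl
    · -- σ = 1
      have hMh2 : p h < M.2 h := hMpos h (by rw [hvMh]; norm_num)
      have hFK : ∀ K : Pt × Pt, K ∈ P.bricks → p ∈ box K.1 K.2 →
          K.1 h < p h → p 2 < K.2 2 → False := by
        intro K hK hpK hKh hK2
        set a := (max (K.1 h) (p h - ε/3) + p h)/2 with ha
        set b := (p 2 + min (K.2 2) (p 2 + ε/3))/2 with hb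
        have hmh := max_lt hKh (show p h - ε/3 < p h by linarith)
        have hm2 := lt_min hK2 (show p 2 < p 2 + ε/3 by linarith)
        have ha1 : K.1 h < a := by
          have := le_max_left (K.1 h) (p h - ε/3); rw [ha]; linarith
        have ha2 : a < p h := by rw [ha]; linarith
        have ha3 : p h - ε/3 < a := by
          have := le_max_right (K.1 h) (p h - ε/3); rw [ha]; linarith
        have hb1 : b < K.2 2 := by
          have := min_le_left (K.2 2) (p 2 + ε/3); rw [hb]; linarith
        have hb2 : p 2 < b := by rw [hb]; linarith
        have hb3 : b < p 2 + ε/3 := by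
          have := min_le_right (K.2 2) (p 2 + ε/3); rw [hb]; linarith
        set w : Pt := fun l => if l = h then a else if l = (2:Fin 3) then b else p l with hw
        have hwh : w h = a := by simp [hw]
        have hw2 : w 2 = b := by simp [hw, h2h]
        have hwl : ∀ l, l ≠ h → l ≠ (2:Fin 3) → w l = p l := by
          intro l h1 h2; simp [hw, h1, h2]
        have hwbox : w ∈ box K.1 K.2 := by
          intro l
          rcases hcover l with rfl | rfl | rfl
          · rw [hwl l hih hi2]; exact hpK l
          · rw [hwh]; exact ⟨ha1.le, le_trans ha2.le (hpK l).2⟩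
          · rw [hw2]; exact ⟨le_trans (hpK 2).1 hb2.le, hb1.le⟩
        have hwball : w ∈ Metric.ball p ε := by
          apply hball
          intro l
          rcases hcover l with rfl | rfl | rfl
          · rw [hwl l hih hi2]; simpa using hε
          · rw [hwh, abs_lt]; constructor <;> linarith
          · rw [hw2, abs_lt]; constructor <;> linarith
        exact hforb w hwball (by rw [hwh]; linarith) (by rw [hw2]; linarith)
          (box_subset_carrier P hK hwbox)
      have hN22 : N.2 2 = p 2 := by
        rcases lt_or_eq_of_le (hpN 2).2 with hlt | he
        · exact absurd (hFK N hN hpN hNh.1 hlt) (fun hf => hf)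
        · exact he.symm
      have hM1h : M.1 h = p h := by
        rcases lt_or_eq_of_le (hpM h).1 with hlt | he
        · exact absurd (hFK M hM hpM hlt hM2top) (fun hf => hf)
        · exact he
      have hM12 : M.1 2 = p 2 := by
        rcases lt_or_eq_of_le (hpM 2).1 with hlt | he
        · exfalso
          set c := min (M.2 h - p h) (N.2 h - p h) / 2 with hc
          set d := min (p 2 - M.1 2) (p 2 - N.1 2) / 2 with hd
          have hc0 : 0 < c := by
            rw [hc]
            have h1 : 0 < M.2 h - p h := by linarith
            have h2 : 0 < N.2 h - p h := by linarith [hNh.2]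
            positivity
          have hd0 : 0 < d := by
            rw [hd]
            have h1 : 0 < p 2 - M.1 2 := by linarith
            have h2 : 0 < p 2 - N.1 2 := by linarith
            positivity
          have hcM : c < M.2 h - p h := by
            rw [hc]; have := min_le_left (M.2 h - p h) (N.2 h - p h); linarith
          have hcN : c < N.2 h - p h := by
            rw [hc]; have := min_le_right (M.2 h - p h) (N.2 h - p h); linarith
          have hdM : d < p 2 - M.1 2 := by
            rw [hd]; have := min_le_left (p 2 - M.1 2) (p 2 - N.1 2); linarith
          have hdN : d < p 2 - N.1 2 := by
            rw [hd]; have := min_le_right (p 2 - M.1 2) (p 2 - N.1 2); linarith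
          set y : Pt := fun l => if l = h then p h + c else if l = (2:Fin 3) then p 2 - d
            else p l with hy
          have hyh : y h = p h + c := by simp [hy]
          have hy2 : y 2 = p 2 - d := by simp [hy, h2h]
          have hyl : ∀ l, l ≠ h → l ≠ (2:Fin 3) → y l = p l := by
            intro l h1 h2; simp [hy, h1, h2]
          have hyM : y ∈ interior (box M.1 M.2) := by
            rw [interior_box]
            intro l
            rcases hcover l with rfl | rfl | rfl
            · rw [hyl l hih hi2]; exact hMi
            · rw [hyh]; exact ⟨by rw [hM1h]; linarith, by linarith⟩
            · rw [hy2]; exact ⟨by linarith, by linarith⟩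
          have hyN : y ∈ interior (box N.1 N.2) := by
            rw [interior_box]
            intro l
            rcases hcover l with rfl | rfl | rfl
            · rw [hyl l hih hi2]; exact hNi
            · rw [hyh]; exact ⟨by linarith [hNh.1], by linarith⟩
            · rw [hy2]; exact ⟨by linarith, by rw [hN22]; linarith⟩
          have hMN : M ≠ N := by
            intro hMN
            rw [hMN, hN22] at hM2top
            exact lt_irrefl _ hM2top
          have hdisj := P.bricks_disjoint M hM N hN hMN
          rw [Set.eq_empty_iff_forall_notMem] at hdisj
          exact hdisj y ⟨hyM, hyN⟩
        · exact he
      refine ⟨N, M, h, hN, hM, hhi, hh2, hN22, hM12, hN2bot, hM2top, hpN, hpM,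
        hNi.1, hNi.2, hMi.1, hMi.2, Or.inl ⟨?_, lt_min hNh.2 hMh2⟩⟩
      rw [hM1h]
      exact max_eq_right hNh.1.le
    · -- σ = -1
      have hMh1 : M.1 h < p h := hMneg h (by rw [hvMh]; norm_num)
      have hFK : ∀ K : Pt × Pt, K ∈ P.bricks → p ∈ box K.1 K.2 →
          p h < K.2 h → p 2 < K.2 2 → False := by
        intro K hK hpK hKh hK2
        set a := (p h + min (K.2 h) (p h + ε/3))/2 with ha
        set b := (p 2 + min (K.2 2) (p 2 + ε/3))/2 with hb
        have hmh := lt_min hKh (show p h < p h + ε/3 by linarith)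
        have hm2 := lt_min hK2 (show p 2 < p 2 + ε/3 by linarith)
        have ha1 : a < K.2 h := by
          have := min_le_left (K.2 h) (p h + ε/3); rw [ha]; linarith
        have ha2 : p h < a := by rw [ha]; linarith
        have ha3 : a < p h + ε/3 := by
          have := min_le_right (K.2 h) (p h + ε/3); rw [ha]; linarith
        have hb1 : b < K.2 2 := by
          have := min_le_left (K.2 2) (p 2 + ε/3); rw [hb]; linarith
        have hb2 : p 2 < b := by rw [hb]; linarith
        have hb3 : b < p 2 + ε/3 := by
          have := min_le_right (K.2 2) (p 2 + ε/3); rw [hb]; linarith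
        set w : Pt := fun l => if l = h then a else if l = (2:Fin 3) then b else p l with hw
        have hwh : w h = a := by simp [hw]
        have hw2 : w 2 = b := by simp [hw, h2h]
        have hwl : ∀ l, l ≠ h → l ≠ (2:Fin 3) → w l = p l := by
          intro l h1 h2; simp [hw, h1, h2]
        have hwbox : w ∈ box K.1 K.2 := by
          intro l
          rcases hcover l with rfl | rfl | rfl
          · rw [hwl l hih hi2]; exact hpK l
          · rw [hwh]; exact ⟨le_trans (hpK l).1 ha2.le, ha1.le⟩
          · rw [hw2]; exact ⟨le_trans (hpK 2).1 hb2.le, hb1.le⟩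
        have hwball : w ∈ Metric.ball p ε := by
          apply hball
          intro l
          rcases hcover l with rfl | rfl | rfl
          · rw [hwl l hih hi2]; simpa using hε
          · rw [hwh, abs_lt]; constructor <;> linarith
          · rw [hw2, abs_lt]; constructor <;> linarith
        exact hforb w hwball (by rw [hwh]; linarith) (by rw [hw2]; linarith)
          (box_subset_carrier P hK hwbox)
      have hN22 : N.2 2 = p 2 := by
        rcases lt_or_eq_of_le (hpN 2).2 with hlt | he
        · exact absurd (hFK N hN hpN hNh.2 hlt) (fun hf => hf)
        · exact he.symm
      have hM2h : M.2 h = p h := by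
        rcases lt_or_eq_of_le (hpM h).2 with hlt | he
        · exact absurd (hFK M hM hpM hlt hM2top) (fun hf => hf)
        · exact he.symm
      have hM12 : M.1 2 = p 2 := by
        rcases lt_or_eq_of_le (hpM 2).1 with hlt | he
        · exfalso
          set c := min (p h - M.1 h) (p h - N.1 h) / 2 with hc
          set d := min (p 2 - M.1 2) (p 2 - N.1 2) / 2 with hd
          have hc0 : 0 < c := by
            rw [hc]
            have h1 : 0 < p h - M.1 h := by linarith
            have h2 : 0 < p h - N.1 h := by linarith [hNh.1]
            positivity
          have hd0 : 0 < d := by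
            rw [hd]
            have h1 : 0 < p 2 - M.1 2 := by linarith
            have h2 : 0 < p 2 - N.1 2 := by linarith
            positivity
          have hcM : c < p h - M.1 h := by
            rw [hc]; have := min_le_left (p h - M.1 h) (p h - N.1 h); linarith
          have hcN : c < p h - N.1 h := by
            rw [hc]; have := min_le_right (p h - M.1 h) (p h - N.1 h); linarith
          have hdM : d < p 2 - M.1 2 := by
            rw [hd]; have := min_le_left (p 2 - M.1 2) (p 2 - N.1 2); linarith
          have hdN : d < p 2 - N.1 2 := by
            rw [hd]; have := min_le_right (p 2 - M.1 2) (p 2 - N.1 2); linarith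
          set y : Pt := fun l => if l = h then p h - c else if l = (2:Fin 3) then p 2 - d
            else p l with hy
          have hyh : y h = p h - c := by simp [hy]
          have hy2 : y 2 = p 2 - d := by simp [hy, h2h]
          have hyl : ∀ l, l ≠ h → l ≠ (2:Fin 3) → y l = p l := by
            intro l h1 h2; simp [hy, h1, h2]
          have hyM : y ∈ interior (box M.1 M.2) := by
            rw [interior_box]
            intro l
            rcases hcover l with rfl | rfl | rfl
            · rw [hyl l hih hi2]; exact hMi
            · rw [hyh]; exact ⟨by linarith, by rw [hM2h]; linarith⟩
            · rw [hy2]; exact ⟨by linarith, by linarith⟩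
          have hyN : y ∈ interior (box N.1 N.2) := by
            rw [interior_box]
            intro l
            rcases hcover l with rfl | rfl | rfl
            · rw [hyl l hih hi2]; exact hNi
            · rw [hyh]; exact ⟨by linarith, by linarith [hNh.2]⟩
            · rw [hy2]; exact ⟨by linarith, by rw [hN22]; linarith⟩
          have hMN : M ≠ N := by
            intro hMN
            rw [hMN, hN22] at hM2top
            exact lt_irrefl _ hM2top
          have hdisj := P.bricks_disjoint M hM N hN hMN
          rw [Set.eq_empty_iff_forall_notMem] at hdisj
          exact hdisj y ⟨hyM, hyN⟩
        · exact he
      refine ⟨N, M, h, hN, hM, hhi, hh2, hN22, hM12, hN2bot, hM2top, hpN, hpM,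
        hNi.1, hNi.2, hMi.1, hMi.2, Or.inr ⟨max_lt hNh.1 hMh1, ?_⟩⟩
      rw [hM2h]
      exact min_eq_right hNh.2.le

/-- Two bricks with top face at the height of a common point are equal. -/
lemma L4low (P : TwoReflexPolyhedron) {B C : Pt × Pt} (hB : B ∈ P.bricks) (hC : C ∈ P.bricks)
    {x : Pt} (hxB : x ∈ box B.1 B.2) (hxC : x ∈ box C.1 C.2)
    (hB2 : B.2 2 = x 2) (hC2 : C.2 2 = x 2) : B = C := by
  by_contra hne
  rcases P.bricks_contact B hB C hC hne with hemp | hcc | hcc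
  · rw [Set.eq_empty_iff_forall_notMem] at hemp
    exact hemp x ⟨hxB, hxC⟩
  · have h1 := P.bricks_proper C hC 2
    linarith
  · have h1 := P.bricks_proper B hB 2
    linarith

/-- Two bricks with bottom face at the height of a common point are equal. -/
lemma L4up (P : TwoReflexPolyhedron) {B C : Pt × Pt} (hB : B ∈ P.bricks) (hC : C ∈ P.bricks)
    {x : Pt} (hxB : x ∈ box B.1 B.2) (hxC : x ∈ box C.1 C.2)
    (hB1 : B.1 2 = x 2) (hC1 : C.1 2 = x 2) : B = C := by
  by_contra hne
  rcases P.bricks_contact B hB C hC hne with hemp | hcc | hcc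
  · rw [Set.eq_empty_iff_forall_notMem] at hemp
    exact hemp x ⟨hxB, hxC⟩
  · have h1 := P.bricks_proper B hB 2
    linarith
  · have h1 := P.bricks_proper C hC 2
    linarith

lemma box_inter (a b c d : Pt) :
    box (fun m => max (a m) (c m)) (fun m => min (b m) (d m)) = box a b ∩ box c d := by
  ext x
  simp only [mem_box, Set.mem_inter_iff, max_le_iff, le_min_iff]
  constructor
  · intro hx
    exact ⟨fun m => ⟨(hx m).1.1, (hx m).2.1⟩, fun m => ⟨(hx m).1.2, (hx m).2.2⟩⟩
  · intro hx m
    exact ⟨⟨(hx.1 m).1, (hx.2 m).1⟩, ⟨(hx.1 m).2, (hx.2 m).2⟩⟩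

lemma box_corners_eq {a b c d : Pt} (hab : ∀ m, a m ≤ b m) (hcd : ∀ m, c m ≤ d m)
    (hbox : box a b = box c d) : a = c ∧ b = d := by
  have haa : a ∈ box c d := by rw [← hbox]; exact fun m => ⟨le_refl _, hab m⟩
  have hbb : b ∈ box c d := by rw [← hbox]; exact fun m => ⟨hab m, le_refl _⟩
  have hcc : c ∈ box a b := by rw [hbox]; exact fun m => ⟨le_refl _, hcd m⟩
  have hdd : d ∈ box a b := by rw [hbox]; exact fun m => ⟨hcd m, le_refl _⟩
  constructor
  · funext m
    exact le_antisymm ((hcc m).1) ((haa m).1)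
  · funext m
    exact le_antisymm ((hbb m).2) ((hdd m).2)

lemma horiz_le {R : Pt × Pt} (hR : IsHorizRect R) : ∀ m, R.1 m ≤ R.2 m := by
  intro m
  fin_cases m
  · exact hR.1.le
  · exact hR.2.1.le
  · exact hR.2.2.le

lemma rect_uniq {R R' : Pt × Pt} (hR : IsHorizRect R) (hR' : IsHorizRect R')
    (hbox : box R.1 R.2 = box R'.1 R'.2) : R = R' := by
  obtain ⟨h1, h2⟩ := box_corners_eq (horiz_le hR) (horiz_le hR') hbox
  exact Prod.ext h1 h2

lemma mem_segment_of_coords {a b x : Pt} {n : Fin 3} (hab : ∀ m, m ≠ n → a m = b m)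
    (hn : a n ≤ b n) (hx : ∀ m, m ≠ n → x m = a m) (h1 : a n ≤ x n) (h2 : x n ≤ b n) :
    x ∈ segment ℝ a b := by
  rcases eq_or_lt_of_le hn with heql | hlt
  · have hxa : x = a := by
      funext m
      by_cases hm : m = n
      · subst hm
        linarith
      · exact hx m hm
    rw [hxa]
    exact left_mem_segment ℝ a b
  · rw [segment_eq_image']
    refine ⟨(x n - a n)/(b n - a n), ⟨div_nonneg (by linarith) (by linarith),
      (div_le_one (by linarith)).mpr (by linarith)⟩, ?_⟩
    funext m
    simp only [Pi.add_apply, Pi.smul_apply, Pi.sub_apply, smul_eq_mul]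
    by_cases hm : m = n
    · subst hm
      rw [div_mul_eq_mul_div, mul_div_assoc, div_self (by linarith), mul_one]
      ring
    · rw [hab m hm]
      rw [hx m hm, hab m hm]
      ring

lemma SLcore {a d L U : ℝ} (hd : 0 < d) (hm1 : L ≤ a + (1/2)*d) (hm2 : a + (1/2)*d ≤ U)
    (hstrict : ∀ u : ℝ, 0 < u → u < 1 → L ≤ a + u*d → a + u*d ≤ U →
      L < a + u*d ∧ a + u*d < U) :
    ∀ t : ℝ, 0 ≤ t → t ≤ 1 → L ≤ a + t*d ∧ a + t*d ≤ U := by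
  have hLU : L ≤ U := le_trans hm1 hm2
  have hc1 : a + 1*d ≤ U := by
    by_contra hcon
    push_neg at hcon
    have hcu : a + ((U - a)/d)*d = U := by field_simp; ring
    have hu12 : 1/2 ≤ (U - a)/d := by
      rw [le_div_iff₀ hd]; linarith
    have hu1 : (U - a)/d < 1 := by
      rw [div_lt_one hd]; linarith
    have hval := (hstrict ((U - a)/d) (by linarith) hu1 (by rw [hcu]; exact hLU)
      (le_of_eq hcu)).2
    rw [hcu] at hval
    exact lt_irrefl _ hval
  have hc0 : L ≤ a + 0*d := by
    by_contra hcon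
    push_neg at hcon
    have hcu : a + ((L - a)/d)*d = L := by field_simp; ring
    have hu12 : (L - a)/d ≤ 1/2 := by rw [div_le_iff₀ hd]; linarith
    have hu0 : 0 < (L - a)/d := by
      apply div_pos ?_ hd
      nlinarith
    have hval := (hstrict ((L - a)/d) hu0 (by linarith) (le_of_eq hcu.symm)
      (by rw [hcu]; exact hLU)).1
    rw [hcu] at hval
    exact lt_irrefl _ hval
  intro t ht0 ht1
  constructor
  · nlinarith
  · nlinarith

lemma SL {a d L U : ℝ} (hm1 : L ≤ a + (1/2)*d) (hm2 : a + (1/2)*d ≤ U)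
    (hstrict : ∀ u : ℝ, 0 < u → u < 1 → L ≤ a + u*d → a + u*d ≤ U →
      L < a + u*d ∧ a + u*d < U) :
    ∀ t : ℝ, 0 ≤ t → t ≤ 1 → L ≤ a + t*d ∧ a + t*d ≤ U := by
  rcases lt_trichotomy d 0 with hd | hd | hd
  · intro t ht0 ht1
    have hcore := SLcore (a := -a) (d := -d) (L := -U) (U := -L) (by linarith)
      (by nlinarith) (by nlinarith) (fun u hu0 hu1 h1 h2 => by
        have h3 : L ≤ a + u*d := by nlinarith
        have h4 : a + u*d ≤ U := by nlinarith
        have hval := hstrict u hu0 hu1 h3 h4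
        constructor <;> nlinarith [hval.1, hval.2]) t ht0 ht1
    constructor <;> nlinarith [hcore.1, hcore.2]
  · subst hd
    intro t ht0 ht1
    constructor <;> nlinarith
  · exact SLcore hd hm1 hm2 hstrict

set_option maxHeartbeats 1000000 in
/-- Every reflex edge lies on the boundary of a contact rectangle whose box is
the intersection of an attached pair of bricks. -/
lemma G1 (P : TwoReflexPolyhedron) {e : Pt × Pt} (he : e ∈ P.reflexEdges) :
    ∃ B B' R : Pt × Pt, P.AttachedAbove B B' ∧ IsHorizRect R ∧
      box R.1 R.2 = box B.1 B.2 ∩ box B'.1 B'.2 ∧ seg e ⊆ rectBoundary R := by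
  have heE : e ∈ P.edges := P.reflex_subset he
  obtain ⟨i, hcoords, hpts⟩ := P.edges_classified e heE
  have hne12 : e.1 ≠ e.2 := P.edges_nondegenerate e heE
  have hdi : e.1 i ≠ e.2 i := by
    intro hc
    apply hne12
    funext m
    by_cases hm : m = i
    · rw [hm]; exact hc
    · exact hcoords m hm
  have hhor : e.1 2 = e.2 2 := P.reflex_horizontal e he
  have hi2 : i ≠ 2 := by
    intro hc
    rw [hc] at hdi
    exact hdi hhor
  have hγm : ∀ (θ : ℝ) (m : Fin 3), (e.1 + θ • (e.2 - e.1)) m = e.1 m + θ * (e.2 m - e.1 m) := by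
    intro θ m
    simp only [Pi.add_apply, Pi.smul_apply, Pi.sub_apply, smul_eq_mul]
  have hγconst : ∀ (θ : ℝ) (m : Fin 3), m ≠ i → (e.1 + θ • (e.2 - e.1)) m = e.1 m := by
    intro θ m hm
    rw [hγm, hcoords m hm]; ring
  have hopen : ∀ θ : ℝ, 0 < θ → θ < 1 → (e.1 + θ • (e.2 - e.1)) ∈ openSegment ℝ e.1 e.2 := by
    intro θ h1 h2
    rw [openSegment_eq_image']
    exact ⟨θ, ⟨h1, h2⟩, rfl⟩
  set p : Pt := e.1 + (1/2 : ℝ) • (e.2 - e.1) with hp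
  have hpconst : ∀ m, m ≠ i → p m = e.1 m := fun m hm => hγconst (1/2) m hm
  have hrp : ReflexEdgePoint P.carrier p i :=
    (hpts p (hopen _ (by norm_num) (by norm_num))).1 he
  obtain ⟨B, B', h, hB, hB', hhi, hh2, hB22, hB'12, hB12, hB'22, hpB, hpB',
    hBi1, hBi2, hB'i1, hB'i2, hdisj⟩ := L2 hi2 hrp
  have h2i : (2 : Fin 3) ≠ i := Ne.symm hi2
  -- interval propagation along the edge
  have hstrict : ∀ u : ℝ, 0 < u → u < 1 →
      max (B.1 i) (B'.1 i) ≤ e.1 i + u*(e.2 i - e.1 i) →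
      e.1 i + u*(e.2 i - e.1 i) ≤ min (B.2 i) (B'.2 i) →
      max (B.1 i) (B'.1 i) < e.1 i + u*(e.2 i - e.1 i) ∧
        e.1 i + u*(e.2 i - e.1 i) < min (B.2 i) (B'.2 i) := by
    intro u hu0 hu1 h1 h2
    have hq2 : (e.1 + u • (e.2 - e.1)) 2 = p 2 := by
      rw [hγconst u 2 h2i, hpconst 2 h2i]
    have hrq : ReflexEdgePoint P.carrier (e.1 + u • (e.2 - e.1)) i :=
      (hpts _ (hopen u hu0 hu1)).1 he
    obtain ⟨C, C', hc, hC, hC', -, -, hC22, hC'12, -, -, hqC, hqC',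
      hCi1, hCi2, hC'i1, hC'i2, -⟩ := L2 hi2 hrq
    have hqB : (e.1 + u • (e.2 - e.1)) ∈ box B.1 B.2 := by
      intro m
      by_cases hm : m = i
      · subst hm
        rw [hγm]
        exact ⟨le_trans (le_max_left _ _) h1, le_trans h2 (min_le_left _ _)⟩
      · rw [hγconst u m hm, ← hpconst m hm]
        exact hpB m
    have hqB' : (e.1 + u • (e.2 - e.1)) ∈ box B'.1 B'.2 := by
      intro m
      by_cases hm : m = i
      · subst hm
        rw [hγm]
        exact ⟨le_trans (le_max_right _ _) h1, le_trans h2 (min_le_right _ _)⟩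
      · rw [hγconst u m hm, ← hpconst m hm]
        exact hpB' m
    have hCB : C = B := L4low P hC hB hqC hqB hC22 (by rw [hq2]; exact hB22)
    have hC'B' : C' = B' := L4up P hC' hB' hqC' hqB' hC'12 (by rw [hq2]; exact hB'12)
    rw [hCB] at hCi1 hCi2
    rw [hC'B'] at hC'i1 hC'i2
    rw [hγm] at hCi1 hCi2 hC'i1 hC'i2
    exact ⟨max_lt hCi1 hC'i1, lt_min hCi2 hC'i2⟩
  have hpi : p i = e.1 i + (1/2)*(e.2 i - e.1 i) := hγm _ i
  have hCT := SL (a := e.1 i) (d := e.2 i - e.1 i)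
    (by rw [← hpi]; exact (max_lt hBi1 hB'i1).le)
    (by rw [← hpi]; exact (lt_min hBi2 hB'i2).le) hstrict
  -- the contact rectangle
  set R : Pt × Pt := (fun m => max (B.1 m) (B'.1 m), fun m => min (B.2 m) (B'.2 m)) with hR
  have hboxR : box R.1 R.2 = box B.1 B.2 ∩ box B'.1 B'.2 := box_inter _ _ _ _
  have hR12 : R.1 2 = p 2 := by
    show max (B.1 2) (B'.1 2) = p 2
    rw [hB'12]
    exact max_eq_right hB12.le
  have hR22 : R.2 2 = p 2 := by
    show min (B.2 2) (B'.2 2) = p 2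
    rw [hB22]
    exact min_eq_left hB'22.le
  have hRi1 : R.1 i < p i := max_lt hBi1 hB'i1
  have hRi2 : p i < R.2 i := lt_min hBi2 hB'i2
  have hRh : (R.1 h = p h ∧ p h < R.2 h) ∨ (R.1 h < p h ∧ R.2 h = p h) := by
    rcases hdisj with ⟨h1, h2⟩ | ⟨h1, h2⟩
    · exact Or.inl ⟨h1, h2⟩
    · exact Or.inr ⟨h1, h2⟩
  have hRhlt : R.1 h < R.2 h := by
    rcases hRh with ⟨h1, h2⟩ | ⟨h1, h2⟩ <;> [rw [h1]; rw [h2]] <;> [exact h2; exact h1]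
  have hcover01 : (i = 0 ∧ h = 1) ∨ (i = 1 ∧ h = 0) := by
    have v1 : i.val < 3 := i.isLt
    have v2 : h.val < 3 := h.isLt
    have n1 : h.val ≠ i.val := fun hcon => hhi (Fin.ext hcon)
    have n2 : i.val ≠ 2 := fun hcon => hi2 (Fin.ext (by rw [hcon]; rfl))
    have n3 : h.val ≠ 2 := fun hcon => hh2 (Fin.ext (by rw [hcon]; rfl))
    have hv : (i.val = 0 ∧ h.val = 1) ∨ (i.val = 1 ∧ h.val = 0) := by omega
    rcases hv with ⟨hc1, hc2⟩ | ⟨hc1, hc2⟩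
    · exact Or.inl ⟨Fin.ext (by rw [hc1]; rfl), Fin.ext (by rw [hc2]; rfl)⟩
    · exact Or.inr ⟨Fin.ext (by rw [hc1]; rfl), Fin.ext (by rw [hc2]; rfl)⟩
  have hR2eq : R.1 2 = R.2 2 := by rw [hR12, hR22]
  have hhorizR : IsHorizRect R := by
    refine ⟨?_, ?_, hR2eq⟩
    · rcases hcover01 with ⟨hc1, hc2⟩ | ⟨hc1, hc2⟩
      · rw [← hc1]; exact lt_trans hRi1 hRi2
      · rw [← hc2]; exact hRhlt
    · rcases hcover01 with ⟨hc1, hc2⟩ | ⟨hc1, hc2⟩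
      · rw [← hc2]; exact hRhlt
      · rw [← hc1]; exact lt_trans hRi1 hRi2
  have hBneB' : B ≠ B' := by
    intro hcon
    rw [hcon, hB'12] at hB12
    exact lt_irrefl _ hB12
  have hatt : P.AttachedAbove B B' :=
    ⟨hB, hB', hBneB', by rw [hB22, hB'12], R, hhorizR, hboxR⟩
  refine ⟨B, B', R, hatt, hhorizR, hboxR, ?_⟩
  -- every point of the edge is on the correct side of R
  intro x hx
  simp only [seg] at hx
  rw [segment_eq_image'] at hx
  obtain ⟨t, ht, rfl⟩ := hx
  have hti := hCT t ht.1 ht.2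
  have hxboxR : (e.1 + t • (e.2 - e.1)) ∈ box R.1 R.2 := by
    rw [hboxR]
    constructor
    · intro m
      by_cases hm : m = i
      · subst hm
        rw [hγm]
        exact ⟨le_trans (le_max_left _ _) hti.1, le_trans hti.2 (min_le_left _ _)⟩
      · rw [hγconst t m hm, ← hpconst m hm]
        exact hpB m
    · intro m
      by_cases hm : m = i
      · subst hm
        rw [hγm]
        exact ⟨le_trans (le_max_right _ _) hti.1, le_trans hti.2 (min_le_right _ _)⟩
      · rw [hγconst t m hm, ← hpconst m hm]
        exact hpB' m
  have hx2 : (e.1 + t • (e.2 - e.1)) 2 = p 2 := by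
    rw [hγconst t 2 h2i, hpconst 2 h2i]
  have hxh : (e.1 + t • (e.2 - e.1)) h = p h := by
    rw [hγconst t h hhi, hpconst h hhi]
  have hfin3 : ∀ m : Fin 3, m = 0 ∨ m = 1 ∨ m = 2 := by decide
  show (e.1 + t • (e.2 - e.1)) ∈ rectBoundary R
  simp only [rectBoundary, Set.mem_union]
  rcases hRh with ⟨hside, -⟩ | ⟨-, hside⟩
  · -- lower h side
    rcases hcover01 with ⟨hc1, hc2⟩ | ⟨hc1, hc2⟩
    · -- i = 0, h = 1 : segment R.1 (corner10 R)
      subst hc1; subst hc2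
      refine Or.inl (Or.inl (Or.inl ?_))
      refine mem_segment_of_coords (n := 0) ?_ ?_ ?_ ?_ ?_
      · intro m hm
        rcases hfin3 m with rfl | rfl | rfl
        · exact absurd rfl hm
        · simp [corner10]
        · simp [corner10]
      · simp only [corner10, if_pos rfl]
        exact horiz_le hhorizR 0
      · intro m hm
        rcases hfin3 m with rfl | rfl | rfl
        · exact absurd rfl hm
        · rw [hxh]; exact hside.symm
        · rw [hx2]; exact hR12.symm
      · exact (hxboxR 0).1
      · simp only [corner10, if_pos rfl]
        exact (hxboxR 0).2
    · -- i = 1, h = 0 : segment R.1 (corner01 R)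
      subst hc1; subst hc2
      refine Or.inr ?_
      refine mem_segment_of_coords (n := 1) ?_ ?_ ?_ ?_ ?_
      · intro m hm
        rcases hfin3 m with rfl | rfl | rfl
        · simp [corner01]
        · exact absurd rfl hm
        · simp [corner01]
      · simp only [corner01, if_pos rfl]
        exact horiz_le hhorizR 1
      · intro m hm
        rcases hfin3 m with rfl | rfl | rfl
        · rw [hxh]; exact hside.symm
        · exact absurd rfl hm
        · rw [hx2]; exact hR12.symm
      · exact (hxboxR 1).1
      · simp only [corner01, if_pos rfl]
        exact (hxboxR 1).2
  · -- upper h side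
    rcases hcover01 with ⟨hc1, hc2⟩ | ⟨hc1, hc2⟩
    · -- i = 0, h = 1 : segment (corner01 R) R.2
      subst hc1; subst hc2
      refine Or.inl (Or.inr ?_)
      refine mem_segment_of_coords (n := 0) ?_ ?_ ?_ ?_ ?_
      · intro m hm
        rcases hfin3 m with rfl | rfl | rfl
        · exact absurd rfl hm
        · simp [corner01]
        · simp only [corner01]
          rw [if_neg (by decide)]
          exact hR2eq
      · simp only [corner01]
        rw [if_neg (by decide)]
        exact horiz_le hhorizR 0
      · intro m hm
        rcases hfin3 m with rfl | rfl | rfl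
        · exact absurd rfl hm
        · simp only [corner01, if_pos rfl]
          rw [hxh]; exact hside.symm
        · simp only [corner01]
          rw [if_neg (by decide), hx2]
          exact hR12.symm
      · simp only [corner01]
        rw [if_neg (by decide)]
        exact (hxboxR 0).1
      · exact (hxboxR 0).2
    · -- i = 1, h = 0 : segment (corner10 R) R.2
      subst hc1; subst hc2
      refine Or.inl (Or.inl (Or.inr ?_))
      refine mem_segment_of_coords (n := 1) ?_ ?_ ?_ ?_ ?_
      · intro m hm
        rcases hfin3 m with rfl | rfl | rfl
        · simp [corner10]
        · exact absurd rfl hm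
        · simp only [corner10]
          rw [if_neg (by decide)]
          exact hR2eq
      · simp only [corner10]
        rw [if_neg (by decide)]
        exact horiz_le hhorizR 1
      · intro m hm
        rcases hfin3 m with rfl | rfl | rfl
        · simp only [corner10, if_pos rfl]
          rw [hxh]; exact hside.symm
        · exact absurd rfl hm
        · simp only [corner10]
          rw [if_neg (by decide), hx2]
          exact hR12.symm
      · simp only [corner10]
        rw [if_neg (by decide)]
        exact (hxboxR 1).1
      · exact (hxboxR 1).2

lemma rectBoundary_subset_box {R : Pt × Pt} (hR : IsHorizRect R) :
    rectBoundary R ⊆ box R.1 R.2 := by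
  have hle := horiz_le hR
  have hc10 : corner10 R ∈ box R.1 R.2 := by
    intro m
    simp only [corner10]
    by_cases hm : m = 0
    · rw [if_pos hm]; subst hm; exact ⟨hle 0, le_refl _⟩
    · rw [if_neg hm]; exact ⟨le_refl _, hle m⟩
  have hc01 : corner01 R ∈ box R.1 R.2 := by
    intro m
    simp only [corner01]
    by_cases hm : m = 1
    · rw [if_pos hm]; subst hm; exact ⟨hle 1, le_refl _⟩
    · rw [if_neg hm]; exact ⟨le_refl _, hle m⟩
  have h1 : R.1 ∈ box R.1 R.2 := fun m => ⟨le_refl _, hle m⟩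
  have h2 : R.2 ∈ box R.1 R.2 := fun m => ⟨hle m, le_refl _⟩
  have hconv := convex_box R.1 R.2
  intro x hx
  simp only [rectBoundary, Set.mem_union] at hx
  rcases hx with ((hx | hx) | hx) | hx
  · exact hconv.segment_subset h1 hc10 hx
  · exact hconv.segment_subset hc10 h2 hx
  · exact hconv.segment_subset hc01 h2 hx
  · exact hconv.segment_subset h1 hc01 hx

end CastleAux

open CastleAux in
/-- Every castle has an even number of reflex edges. -/
theorem castle_even_reflex (P : TwoReflexPolyhedron) (hcastle : P.IsCastle) :
    Even P.reflexEdges.card := by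
  classical
  obtain ⟨hstack, base, hbmem, hsubS, htop, hbot, hb0⟩ := hcastle
  set attF : Finset ((Pt × Pt) × (Pt × Pt)) :=
    (P.bricks ×ˢ P.bricks).filter (fun q => P.AttachedAbove q.1 q.2) with hattF
  have hmemattF : ∀ q : (Pt × Pt) × (Pt × Pt), q ∈ attF ↔ P.AttachedAbove q.1 q.2 := by
    intro q
    rw [hattF, Finset.mem_filter, Finset.mem_product]
    constructor
    · exact fun hq => hq.2
    · intro hq; exact ⟨⟨hq.1, hq.2.1⟩, hq⟩
  -- attF has even cardinality: fiberwise over the lower brick, each brick has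
  -- 0 or 2 bricks attached above it
  have hevenatt : Even attF.card := by
    rw [Finset.card_eq_sum_card_fiberwise (f := Prod.fst) (t := P.bricks)
      (fun q hq => ((hmemattF q).mp hq).1)]
    apply Finset.even_sum
    intro B hB
    have hfib : (attF.filter (fun q => q.1 = B)).card
        = (P.bricks.filter (fun B' => P.AttachedAbove B B')).card := by
      refine Finset.card_bij' (fun q _ => q.2) (fun B' _ => (B, B')) ?_ ?_ ?_ ?_
      · intro q hq
        rw [Finset.mem_filter] at hq ⊢
        have hatt := (hmemattF q).mp hq.1
        exact ⟨hatt.2.1, hq.2 ▸ hatt⟩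
      · intro B' hB'
        rw [Finset.mem_filter] at hB' ⊢
        exact ⟨(hmemattF (B, B')).mpr hB'.2, rfl⟩
      · intro q hq
        rw [Finset.mem_filter] at hq
        exact Prod.ext hq.2.symm rfl
      · intro B' hB'
        rfl
    have hset : {B' ∈ (↑P.bricks : Set (Pt × Pt)) | P.AttachedAbove B B'}
        = ↑(P.bricks.filter (fun B' => P.AttachedAbove B B')) := by
      ext B'
      simp [Set.mem_setOf_eq, Finset.mem_coe, Finset.mem_filter]
    have hcard := htop B (Finset.mem_coe.mpr hB)
    rw [hset, Set.ncard_coe_finset] at hcard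
    rw [hfib]
    rcases hcard with h0 | h2
    · rw [h0]; exact Even.zero
    · rw [h2]; exact ⟨1, rfl⟩
  -- to each attached pair associate the unique reflex edge on the boundary of
  -- its contact rectangle
  have keyex : ∀ q ∈ attF, ∃ f : Pt × Pt, f ∈ P.reflexEdges ∧
      ∀ R : Pt × Pt, IsHorizRect R → box R.1 R.2 = box q.1.1 q.1.2 ∩ box q.2.1 q.2.2 →
        {e ∈ (↑P.reflexEdges : Set (Pt × Pt)) | seg e ⊆ rectBoundary R} = {f} := by
    intro q hq
    have hatt := (hmemattF q).mp hq
    obtain ⟨-, -, -, -, R0, hR0h, hR0box⟩ := hatt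
    have hcontact : P.IsContactRect R0 := ⟨hR0h, q.1, q.2, (hmemattF q).mp hq, hR0box⟩
    have hprim := hstack R0 hcontact
    obtain ⟨f, hf⟩ := Set.ncard_eq_one.mp hprim.2
    have hfmem : f ∈ {e ∈ (↑P.reflexEdges : Set (Pt × Pt)) | seg e ⊆ rectBoundary R0} := by
      rw [hf]; exact rfl
    refine ⟨f, Finset.mem_coe.mp hfmem.1, ?_⟩
    intro R hRh hRbox
    have hReq : R = R0 := rect_uniq hRh hR0h (by rw [hRbox, hR0box])
    rw [hReq, hf]
  choose φ hφmem hφuniq using keyex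
  have hcards : attF.card = P.reflexEdges.card := by
    apply Finset.card_bij (i := fun q hq => φ q hq)
    · intro q hq
      exact hφmem q hq
    · -- injectivity
      intro q1 hq1 q2 hq2 hEq
      have hatt1 := (hmemattF q1).mp hq1
      have hatt2 := (hmemattF q2).mp hq2
      obtain ⟨hq11, hq12, -, hz1eq, R1, hR1h, hR1box⟩ := hatt1
      obtain ⟨hq21, hq22, -, hz2eq, R2, hR2h, hR2box⟩ := hatt2
      have hs1 := hφuniq q1 hq1 R1 hR1h hR1box
      have hs2 := hφuniq q2 hq2 R2 hR2h hR2box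
      have hf1 : seg (φ q1 hq1) ⊆ rectBoundary R1 := by
        have hm : φ q1 hq1 ∈ {e ∈ (↑P.reflexEdges : Set (Pt × Pt)) |
            seg e ⊆ rectBoundary R1} := by
          rw [hs1]; exact rfl
        exact hm.2
      have hf2 : seg (φ q1 hq1) ⊆ rectBoundary R2 := by
        have hm : φ q2 hq2 ∈ {e ∈ (↑P.reflexEdges : Set (Pt × Pt)) |
            seg e ⊆ rectBoundary R2} := by
          rw [hs2]; exact rfl
        rw [hEq]
        exact hm.2
      have hxseg : (φ q1 hq1).1 ∈ seg (φ q1 hq1) := left_mem_segment ℝ _ _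
      have hxR1 : (φ q1 hq1).1 ∈ box R1.1 R1.2 := rectBoundary_subset_box hR1h (hf1 hxseg)
      have hxR2 : (φ q1 hq1).1 ∈ box R2.1 R2.2 := rectBoundary_subset_box hR2h (hf2 hxseg)
      rw [hR1box] at hxR1
      rw [hR2box] at hxR2
      have hza : q1.1.2 2 = (φ q1 hq1).1 2 := by
        have h1 := (hxR1.1 2).2
        have h2 := (hxR1.2 2).1
        linarith [hz1eq]
      have hzb : q2.1.2 2 = (φ q1 hq1).1 2 := by
        have h1 := (hxR2.1 2).2
        have h2 := (hxR2.2 2).1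
        linarith [hz2eq]
      have hBeq : q1.1 = q2.1 := L4low P hq11 hq21 hxR1.1 hxR2.1 hza hzb
      have hB'eq : q1.2 = q2.2 := L4up P hq12 hq22 hxR1.2 hxR2.2
        (by rw [← hz1eq]; exact hza) (by rw [← hz2eq]; exact hzb)
      exact Prod.ext hBeq hB'eq
    · -- surjectivity
      intro f hf
      obtain ⟨B, B', R, hatt, hRh, hRbox, hsegsub⟩ := G1 P hf
      have hq : (B, B') ∈ attF := (hmemattF (B, B')).mpr hatt
      refine ⟨(B, B'), hq, ?_⟩
      have hs := hφuniq (B, B') hq R hRh hRbox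
      have hm : f ∈ {e ∈ (↑P.reflexEdges : Set (Pt × Pt)) | seg e ⊆ rectBoundary R} :=
        ⟨Finset.mem_coe.mpr hf, hsegsub⟩
      rw [hs] at hm
      exact (Set.mem_singleton_iff.mp hm).symm
  rw [← hcards]
  exact hevenatt
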